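/- Let η(x) = F̄(x)/f(x) be the reciprocal hazard. If E[X^r] < ∞ for some r > 2 and η'(x) → c as x → ∞, then lim_{x→∞} η(x)/e(x) = 1 - c, where e is the mean residual life function. -/

import Mathlib

open MeasureTheory Set Filter

/-- If `E[Xʳ] < ∞` for some `r > 2` and `η'(x) → c` where `η = F̄/f`, then
`η(x)/e(x) → 1 - c` as `x → ∞`. -/
theorem stmt11 (f : ℝ → ℝ) (hfpos : ∀ x, 0 < f x) (hfc : Continuous f)
    (hfint : IntegrableOn f (Ioi 0))
    (Fbar : ℝ → ℝ) (hFbar : ∀ x, 0 ≤ x → Fbar x = ∫ t in Ioi x, f t)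
    (hF0 : Fbar 0 = 1)
    (r : ℝ) (hr : 2 < r)
    (hmom : IntegrableOn (fun t => t ^ r * f t) (Ioi 0))
    (η η' : ℝ → ℝ) (hη : ∀ x, η x = Fbar x / f x)
    (hηd : ∀ x, HasDerivAt η (η' x) x)
    (c : ℝ) (hc : Tendsto η' atTop (nhds c))
    (e : ℝ → ℝ) (he : ∀ x, e x = (∫ t in Ioi x, Fbar t) / Fbar x) :
    Tendsto (fun x => η x / e x) atTop (nhds (1 - c)) := by
  have hfne : ∀ x, f x ≠ 0 := fun x => (hfpos x).ne'
  have hηc : Continuous η := continuous_iff_continuousAt.2 fun x => (hηd x).continuousAt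
  have hFeq : ∀ x, Fbar x = η x * f x := by
    intro x; rw [hη, div_mul_cancel₀ _ (hfne x)]
  have hFc : Continuous Fbar := by
    have : Continuous fun x => η x * f x := hηc.mul hfc
    simpa [← funext hFeq] using this
  -- integrability of f on Ioi x for x ≥ 0
  have hfintx : ∀ x : ℝ, 0 ≤ x → IntegrableOn f (Ioi x) := fun x hx =>
    hfint.mono_set (Ioi_subset_Ioi hx)
  -- positivity of Fbar
  have hFpos : ∀ x : ℝ, 0 ≤ x → 0 < Fbar x := by
    intro x hx
    rw [hFbar x hx]
    rw [setIntegral_pos_iff_support_of_nonneg_ae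
      ((ae_restrict_iff' measurableSet_Ioi).2 (ae_of_all _ fun t _ => (hfpos t).le))
      (hfintx x hx)]
    have : Function.support f ∩ Ioi x = Ioi x := by
      ext t; simp [Function.support, hfne t]
    rw [this, Real.volume_Ioi]
    simp
  have hFne : ∀ x : ℝ, 0 ≤ x → Fbar x ≠ 0 := fun x hx => (hFpos x hx).ne'
  -- split identity
  have hsplit : ∀ y : ℝ, 0 ≤ y → Fbar y = 1 - ∫ t in (0:ℝ)..y, f t := by
    intro y hy
    have hu : Ioc 0 y ∪ Ioi y = Ioi (0:ℝ) := Ioc_union_Ioi_eq_Ioi hy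
    have h1 : IntegrableOn f (Ioc 0 y) := hfint.mono_set Ioc_subset_Ioi_self
    have h2 : IntegrableOn f (Ioi y) := hfintx y hy
    have hsum : (∫ t in Ioi (0:ℝ), f t) = (∫ t in Ioc 0 y, f t) + ∫ t in Ioi y, f t := by
      rw [← hu, setIntegral_union (Ioc_disjoint_Ioi le_rfl) measurableSet_Ioi h1 h2]
    have h0 : (1:ℝ) = ∫ t in Ioi (0:ℝ), f t := by rw [← hF0]; exact hFbar 0 le_rfl
    rw [hFbar y hy, intervalIntegral.integral_of_le hy]
    linarith [hsum, h0]
  -- derivative of Fbar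
  have hFd : ∀ x : ℝ, 0 < x → HasDerivAt Fbar (-(f x)) x := by
    intro x hx
    have h1 : HasDerivAt (fun y => ∫ t in (0:ℝ)..y, f t) (f x) x :=
      intervalIntegral.integral_hasDerivAt_right (hfc.intervalIntegrable 0 x)
        (hfc.stronglyMeasurableAtFilter _ _) hfc.continuousAt
    have h2 : HasDerivAt (fun y => 1 - ∫ t in (0:ℝ)..y, f t) (-(f x)) x := by
      have h : HasDerivAt (fun y => 1 - ∫ t in (0:ℝ)..y, f t) (0 - f x) x :=
        (hasDerivAt_const x (1:ℝ)).sub h1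
      rwa [zero_sub] at h
    refine h2.congr_of_eventuallyEq ?_
    filter_upwards [eventually_gt_nhds hx] with y hy
    exact hsplit y hy.le
  -- Markov bound
  set M := ∫ t in Ioi (0:ℝ), t ^ r * f t with hMdef
  have hM0 : 0 ≤ M := setIntegral_nonneg measurableSet_Ioi
    (fun t ht => mul_nonneg (Real.rpow_nonneg (le_of_lt ht) r) (hfpos t).le)
  have hMarkov : ∀ x : ℝ, 1 ≤ x → Fbar x ≤ M * x ^ (-r) := by
    intro x hx
    have hx0 : (0:ℝ) < x := lt_of_lt_of_le zero_lt_one hx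
    have key : x ^ r * Fbar x ≤ M := by
      rw [hFbar x hx0.le, ← integral_const_mul]
      have step1 : (∫ t in Ioi x, x ^ r * f t) ≤ ∫ t in Ioi x, t ^ r * f t := by
        refine setIntegral_mono_on ((hfintx x hx0.le).const_mul _)
          (hmom.mono_set (Ioi_subset_Ioi hx0.le)) measurableSet_Ioi ?_
        intro t ht
        exact mul_le_mul_of_nonneg_right
          (Real.rpow_le_rpow hx0.le (le_of_lt ht) (by linarith)) (hfpos t).le
      have step2 : (∫ t in Ioi x, t ^ r * f t) ≤ M := by
        rw [hMdef]
        refine setIntegral_mono_set hmom ?_ ?_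
        · exact (ae_restrict_iff' measurableSet_Ioi).2 (ae_of_all _ fun t ht =>
            mul_nonneg (Real.rpow_nonneg (le_of_lt ht) r) (hfpos t).le)
        · exact ae_of_all _ (Ioi_subset_Ioi hx0.le)
      linarith
    have hxr : (0:ℝ) < x ^ r := Real.rpow_pos_of_pos hx0 r
    rw [Real.rpow_neg hx0.le, ← div_eq_mul_inv, le_div_iff₀ hxr]
    linarith [key, mul_comm (Fbar x) (x ^ r)]
  -- integrability of Fbar on Ioi a for a ≥ 1
  have hFint : ∀ a : ℝ, 1 ≤ a → IntegrableOn Fbar (Ioi a) := by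
    intro a ha
    have ha0 : (0:ℝ) < a := lt_of_lt_of_le zero_lt_one ha
    have hdom : IntegrableOn (fun t => M * t ^ (-r)) (Ioi a) :=
      (integrableOn_Ioi_rpow_of_lt (by linarith) ha0).const_mul M
    refine Integrable.mono' hdom (hFc.aestronglyMeasurable.restrict) ?_
    refine (ae_restrict_iff' measurableSet_Ioi).2 (ae_of_all _ fun t ht => ?_)
    have ht1 : 1 ≤ t := le_trans ha (le_of_lt ht)
    rw [Real.norm_eq_abs, abs_of_nonneg (hFpos t (by linarith)).le]
    exact hMarkov t ht1
  -- threshold a₀ where η' is within 1 of c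
  obtain ⟨a₁, ha₁⟩ : ∃ a₁ : ℝ, ∀ t ≥ a₁, |η' t - c| ≤ 1 := by
    have := (hc.eventually (Metric.ball_mem_nhds c one_pos)).exists_forall_of_atTop
    obtain ⟨a₁, h⟩ := this
    exact ⟨a₁, fun t ht => (le_of_lt (by simpa [Real.dist_eq] using h t ht))⟩
  set a₀ : ℝ := max a₁ 1 with ha₀def
  have ha₀1 : (1:ℝ) ≤ a₀ := le_max_right _ _
  have ha₀0 : (0:ℝ) < a₀ := lt_of_lt_of_le zero_lt_one ha₀1
  set B : ℝ := |c| + 1 with hBdef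
  have hη'B : ∀ t, a₀ ≤ t → |η' t| ≤ B := by
    intro t ht
    have := ha₁ t (le_trans (le_max_left _ _) ht)
    calc |η' t| = |(η' t - c) + c| := by ring_nf
    _ ≤ |η' t - c| + |c| := abs_add_le _ _
    _ ≤ B := by rw [hBdef]; linarith
  have hB0 : 0 ≤ B := by rw [hBdef]; positivity
  -- η positive on [0,∞)
  have hηpos : ∀ x : ℝ, 0 ≤ x → 0 < η x := fun x hx => by
    rw [hη]; exact div_pos (hFpos x hx) (hfpos x)
  -- MVT linear growth bound for η
  have hηlin : ∀ x, a₀ ≤ x → η x ≤ η a₀ + B * x := by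
    intro x hx
    rcases eq_or_lt_of_le hx with h | h
    · rw [← h]; nlinarith [hηpos a₀ ha₀0.le]
    · obtain ⟨ξ, hξ, hslope⟩ := exists_hasDerivAt_eq_slope η η' h
        (hηc.continuousOn) (fun y _ => hηd y)
      have hξa : a₀ ≤ ξ := hξ.1.le
      have hne : x - a₀ ≠ 0 := sub_ne_zero.2 (ne_of_gt h)
      have : η x - η a₀ = η' ξ * (x - a₀) := by
        rw [hslope]; field_simp
      have hb : η' ξ * (x - a₀) ≤ B * x := by
        have h1 : η' ξ ≤ B := le_trans (le_abs_self _) (hη'B ξ hξa)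
        nlinarith [abs_nonneg (η' ξ), ha₀0]
      linarith
  -- η x * Fbar x → 0
  have hgto : Tendsto (fun x => η x * Fbar x) atTop (nhds 0) := by
    have hub : Tendsto (fun x : ℝ => η a₀ * (M * x ^ (-r)) + B * M * x ^ (1 - r))
        atTop (nhds 0) := by
      have t1 : Tendsto (fun x : ℝ => x ^ (-r)) atTop (nhds 0) :=
        tendsto_rpow_neg_atTop (by linarith)
      have t2 : Tendsto (fun x : ℝ => x ^ (1 - r)) atTop (nhds 0) := by
        have : Tendsto (fun x : ℝ => x ^ (-(r - 1))) atTop (nhds 0) :=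
          tendsto_rpow_neg_atTop (by linarith)
        simpa [neg_sub] using this
      have := ((t1.const_mul (η a₀ * M)).add (t2.const_mul (B * M)))
      simpa [mul_assoc, add_zero, mul_zero] using this
    refine tendsto_of_tendsto_of_tendsto_of_le_of_le' tendsto_const_nhds hub ?_ ?_
    · filter_upwards [eventually_ge_atTop a₀] with x hx
      exact mul_nonneg (hηpos x (le_trans ha₀0.le hx)).le (hFpos x (le_trans ha₀0.le hx)).le
    · filter_upwards [eventually_ge_atTop a₀] with x hx
      have hx1 : (1:ℝ) ≤ x := le_trans ha₀1 hx
      have hx0 : (0:ℝ) < x := lt_of_lt_of_le zero_lt_one hx1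
      have hF : Fbar x ≤ M * x ^ (-r) := hMarkov x hx1
      have hFnn : 0 ≤ Fbar x := (hFpos x hx0.le).le
      have h1 : η x * Fbar x ≤ (η a₀ + B * x) * Fbar x := by
        refine mul_le_mul_of_nonneg_right (hηlin x hx) hFnn
      have h2 : (η a₀ + B * x) * Fbar x ≤ (η a₀ + B * x) * (M * x ^ (-r)) := by
        refine mul_le_mul_of_nonneg_left hF ?_
        have := hηpos a₀ ha₀0.le
        nlinarith
      have h3 : (η a₀ + B * x) * (M * x ^ (-r))
          = η a₀ * (M * x ^ (-r)) + B * M * (x * x ^ (-r)) := by ring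
      have h4 : x * x ^ (-r) = x ^ (1 - r) := by
        rw [show (1:ℝ) - r = 1 + -r by ring, Real.rpow_add hx0, Real.rpow_one]
      calc η x * Fbar x ≤ (η a₀ + B * x) * (M * x ^ (-r)) := le_trans h1 h2
      _ = η a₀ * (M * x ^ (-r)) + B * M * x ^ (1 - r) := by rw [h3, h4]
  -- measurability of η'
  have hη'm : Measurable η' := by
    have : η' = deriv η := funext fun x => ((hηd x).deriv).symm
    rw [this]; exact measurable_deriv η
  -- integrability of (η' - 1) * Fbar on Ioi x for x ≥ a₀
  have hint1 : ∀ x : ℝ, a₀ ≤ x → IntegrableOn (fun t => (η' t - 1) * Fbar t) (Ioi x) := by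
    intro x hx
    have hx1 : (1:ℝ) ≤ x := le_trans ha₀1 hx
    refine Integrable.mono' (((hFint x hx1).const_mul (B + 1)))
      (((hη'm.sub measurable_const).aestronglyMeasurable.restrict).mul
        hFc.aestronglyMeasurable.restrict) ?_
    refine (ae_restrict_iff' measurableSet_Ioi).2 (ae_of_all _ fun t ht => ?_)
    have hta : a₀ ≤ t := le_trans hx (le_of_lt ht)
    have hFnn : 0 ≤ Fbar t := (hFpos t (le_trans ha₀0.le hta)).le
    rw [Real.norm_eq_abs, abs_mul, abs_of_nonneg hFnn]
    refine mul_le_mul_of_nonneg_right ?_ hFnn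
    calc |η' t - 1| ≤ |η' t| + 1 := by
          have := abs_add_le (η' t) (-1:ℝ); simpa [sub_eq_add_neg] using this
    _ ≤ B + 1 := by linarith [hη'B t hta]
  -- FTC identity
  have hident : ∀ x : ℝ, a₀ ≤ x →
      (∫ t in Ioi x, (η' t - 1) * Fbar t) = 0 - η x * Fbar x := by
    intro x hx
    have hx0 : (0:ℝ) < x := lt_of_lt_of_le ha₀0 hx
    refine integral_Ioi_of_hasDerivAt_of_tendsto' (f := fun y => η y * Fbar y) ?_ (hint1 x hx) hgto
    intro y hy
    have hy0 : (0:ℝ) < y := lt_of_lt_of_le hx0 hy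
    have h := (hηd y).mul (hFd y hy0)
    have : η' y * Fbar y + η y * -(f y) = (η' y - 1) * Fbar y := by
      rw [hFeq y]; ring
    rw [← this]; exact h
  -- positivity of the integral of Fbar
  have hIpos : ∀ x : ℝ, 1 ≤ x → 0 < ∫ t in Ioi x, Fbar t := by
    intro x hx
    have hx0 : (0:ℝ) ≤ x := le_trans zero_le_one hx
    rw [setIntegral_pos_iff_support_of_nonneg_ae
      ((ae_restrict_iff' measurableSet_Ioi).2 (ae_of_all _ fun t ht =>
        (hFpos t (le_trans hx0 (le_of_lt ht))).le))
      (hFint x hx)]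
    have hsub : Ioi x ⊆ Function.support Fbar ∩ Ioi x := fun t ht =>
      ⟨hFne t (le_trans hx0 (le_of_lt ht)), ht⟩
    refine lt_of_lt_of_le ?_ (measure_mono hsub)
    rw [Real.volume_Ioi]; simp
  -- final epsilon argument
  rw [Metric.tendsto_atTop]
  intro ε hε
  obtain ⟨N₁, hN₁⟩ := Metric.tendsto_atTop.1 hc (ε/2) (half_pos hε)
  refine ⟨max N₁ a₀, fun x hx => ?_⟩
  have hxa : a₀ ≤ x := le_trans (le_max_right _ _) hx
  have hxN : N₁ ≤ x := le_trans (le_max_left _ _) hx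
  have hx1 : (1:ℝ) ≤ x := le_trans ha₀1 hxa
  have hx0 : (0:ℝ) ≤ x := le_trans zero_le_one hx1
  set I : ℝ := ∫ t in Ioi x, Fbar t with hIdef
  have hI : 0 < I := hIpos x hx1
  -- integrability pieces
  have hintF : IntegrableOn Fbar (Ioi x) := hFint x hx1
  have hintcη : IntegrableOn (fun t => (c - η' t) * Fbar t) (Ioi x) := by
    have h1 : IntegrableOn (fun t => (c - 1) * Fbar t) (Ioi x) := hintF.const_mul _
    have h2 := hint1 x hxa
    have h3 := h1.sub h2
    refine h3.congr (ae_of_all _ fun t => ?_)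
    simp only [Pi.sub_apply]; ring
  -- the main identity: η x * Fbar x = (1 - c) * I + D
  set D : ℝ := ∫ t in Ioi x, (c - η' t) * Fbar t with hDdef
  have hkey : η x * Fbar x = (1 - c) * I + D := by
    have h1 : η x * Fbar x = ∫ t in Ioi x, (1 - η' t) * Fbar t := by
      have := hident x hxa
      rw [show (∫ t in Ioi x, (1 - η' t) * Fbar t)
          = -∫ t in Ioi x, (η' t - 1) * Fbar t by
        rw [← integral_neg]; exact integral_congr_ae (ae_of_all _ fun t => by ring)]
      linarith [this]
    have h2 : (∫ t in Ioi x, (1 - η' t) * Fbar t)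
        = (∫ t in Ioi x, (1 - c) * Fbar t) + D := by
      rw [hDdef, ← integral_add (hintF.const_mul _) hintcη]
      exact integral_congr_ae (ae_of_all _ fun t => by ring)
    rw [h1, h2, integral_const_mul]
  -- bound on D
  have hDbound : |D| ≤ (ε/2) * I := by
    have hb : ‖∫ t in Ioi x, (c - η' t) * Fbar t‖ ≤ ∫ t in Ioi x, (ε/2) * Fbar t := by
      refine norm_integral_le_of_norm_le (hintF.const_mul _) ?_
      refine (ae_restrict_iff' measurableSet_Ioi).2 (ae_of_all _ fun t ht => ?_)
      have htN : N₁ ≤ t := le_trans hxN (le_of_lt ht)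
      have hd := hN₁ t htN
      rw [Real.dist_eq] at hd
      have hFnn : 0 ≤ Fbar t := (hFpos t (le_trans hx0 (le_of_lt ht))).le
      rw [Real.norm_eq_abs, abs_mul, abs_of_nonneg hFnn]
      refine mul_le_mul_of_nonneg_right ?_ hFnn
      rw [abs_sub_comm]; exact hd.le
    rw [Real.norm_eq_abs, integral_const_mul, ← hIdef, ← hDdef] at hb
    exact hb
  -- conclude
  have heval : η x / e x = (1 - c) + D / I := by
    rw [he x, div_div_eq_mul_div, ← hIdef, hkey, add_div,
      mul_div_assoc, div_self hI.ne', mul_one]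
  rw [heval, Real.dist_eq]
  have : |(1 - c) + D / I - (1 - c)| = |D| / I := by
    rw [add_sub_cancel_left, abs_div, abs_of_pos hI]
  rw [this]
  rw [div_lt_iff₀ hI]
  calc |D| ≤ (ε/2) * I := hDbound
  _ < ε * I := by nlinarith
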